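/- arXiv:2203.07475 — 6 statements merged into one kernel-verified Lean document; each statement's English description precedes it below -/
import Mathlib

section
/- Potential shaping leaves the advantage function invariant: if R' is produced by potential shaping of R with any potential function Φ, then for any policy π, the advantage function under R' equals the advantage function under R, i.e. A'^π(s,a) = A^π(s,a) for all s, a. -/
/-- Potential shaping leaves the advantage function invariant:
`A'^π(s,a) = A^π(s,a)` where `A^π(s,a) = Q^π(s,a) − V^π(s)` and
`V^π(s) = E_{A∼π(s)}[Q^π(s,A)]`. -/
theorem shaping_preserves_advantage {S A : Type*} [Fintype S] [Fintype A]
    (γ : ℝ) (hγ0 : 0 < γ) (hγ1 : γ < 1)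
    (τ : S → A → S → ℝ) (hτ0 : ∀ s a s', 0 ≤ τ s a s')
    (hτ1 : ∀ s a, ∑ s', τ s a s' = 1)
    (π : S → A → ℝ) (hπ0 : ∀ s a, 0 ≤ π s a) (hπ1 : ∀ s, ∑ a, π s a = 1)
    (R R' : S → A → S → ℝ) (Φ : S → ℝ)
    (hshape : ∀ s a s', R' s a s' = R s a s' + γ * Φ s' - Φ s)
    (Q Q' : S → A → ℝ)
    (hQ : ∀ s a, Q s a = ∑ s', τ s a s' * (R s a s' + γ * ∑ a', π s' a' * Q s' a'))
    (hQ' : ∀ s a, Q' s a = ∑ s', τ s a s' * (R' s a s' + γ * ∑ a', π s' a' * Q' s' a')) :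
    ∀ s a, Q' s a - (∑ a', π s a' * Q' s a') = Q s a - (∑ a', π s a' * Q s a') := by
  intro s₀ a₀
  have hS : Nonempty S := ⟨s₀⟩
  have hA : Nonempty A := ⟨a₀⟩
  set D : S → A → ℝ := fun s a => Q' s a - Q s a + Φ s with hD
  have hπD : ∀ s', ∑ a', π s' a' * D s' a'
      = (∑ a', π s' a' * Q' s' a') - (∑ a', π s' a' * Q s' a') + Φ s' := by
    intro s'
    have h1 : ∑ a', π s' a' * D s' a'
        = ∑ a', (π s' a' * Q' s' a' - π s' a' * Q s' a' + π s' a' * Φ s') := by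
      apply Finset.sum_congr rfl; intro a' _; simp only [hD]; ring
    rw [h1, Finset.sum_add_distrib, Finset.sum_sub_distrib, ← Finset.sum_mul, hπ1]
    ring
  have hrec : ∀ s a, D s a = γ * ∑ s', τ s a s' * ∑ a', π s' a' * D s' a' := by
    intro s a
    have h2 : D s a
        = (∑ s', (γ * (τ s a s' * ∑ a', π s' a' * D s' a') - τ s a s' * Φ s)) + Φ s := by
      simp only [hD]
      rw [hQ, hQ', ← Finset.sum_sub_distrib]
      congr 1
      apply Finset.sum_congr rfl
      intro s' _
      rw [hshape, hπD]
      ring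
    rw [h2, Finset.sum_sub_distrib, ← Finset.mul_sum, ← Finset.sum_mul, hτ1]
    ring
  -- sup-norm contraction argument
  have hne : (Finset.univ : Finset (S × A)).Nonempty := Finset.univ_nonempty
  set M : ℝ := Finset.univ.sup' hne (fun p : S × A => |D p.1 p.2|) with hM
  have hMle : ∀ s a, |D s a| ≤ M := fun s a =>
    Finset.le_sup' (fun p : S × A => |D p.1 p.2|) (Finset.mem_univ (s, a))
  have hM0 : 0 ≤ M := le_trans (abs_nonneg _) (hMle s₀ a₀)
  have hbound : ∀ s a, |D s a| ≤ γ * M := by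
    intro s a
    rw [hrec s a, abs_mul, abs_of_pos hγ0]
    refine mul_le_mul_of_nonneg_left ?_ (le_of_lt hγ0)
    calc |∑ s', τ s a s' * ∑ a', π s' a' * D s' a'|
        ≤ ∑ s', |τ s a s' * ∑ a', π s' a' * D s' a'| := Finset.abs_sum_le_sum_abs _ _
      _ ≤ ∑ s', τ s a s' * M := by
          apply Finset.sum_le_sum
          intro s' _
          rw [abs_mul, abs_of_nonneg (hτ0 s a s')]
          refine mul_le_mul_of_nonneg_left ?_ (hτ0 s a s')
          calc |∑ a', π s' a' * D s' a'|
              ≤ ∑ a', |π s' a' * D s' a'| := Finset.abs_sum_le_sum_abs _ _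
            _ ≤ ∑ a', π s' a' * M := by
                apply Finset.sum_le_sum
                intro a' _
                rw [abs_mul, abs_of_nonneg (hπ0 s' a')]
                exact mul_le_mul_of_nonneg_left (hMle s' a') (hπ0 s' a')
            _ = M := by rw [← Finset.sum_mul, hπ1, one_mul]
      _ = M := by rw [← Finset.sum_mul, hτ1, one_mul]
  have hMγ : M ≤ γ * M := by
    obtain ⟨p, _, hp⟩ := Finset.exists_mem_eq_sup' hne (fun p : S × A => |D p.1 p.2|)
    calc M = |D p.1 p.2| := hp
      _ ≤ γ * M := hbound p.1 p.2
  have hMz : M = 0 := by nlinarith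
  have hDz : ∀ s a, D s a = 0 := by
    intro s a
    have := hMle s a
    rw [hMz] at this
    exact abs_nonpos_iff.mp this
  have h3 : Q' s₀ a₀ = Q s₀ a₀ - Φ s₀ := by
    have := hDz s₀ a₀; simp only [hD] at this; linarith
  have h4 : (∑ a', π s₀ a' * Q' s₀ a') = (∑ a', π s₀ a' * Q s₀ a') - Φ s₀ := by
    have h5 := hπD s₀
    have h6 : ∑ a', π s₀ a' * D s₀ a' = 0 := by
      apply Finset.sum_eq_zero; intro a' _; rw [hDz]; ring
    rw [h6] at h5; linarith
  rw [h3, h4]; ring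
end

section
/- The Q-function determines the expected one-step reward and vice versa: for a fixed policy π, two reward functions R₁ and R₂ yield the same Q-function Q^π if and only if E_{S'∼τ(s,a)}[R₁(s,a,S')] = E_{S'∼τ(s,a)}[R₂(s,a,S')] for all states s and actions a (i.e. R₂ is produced from R₁ by S'-redistribution). -/
/-- For a fixed policy `π`, two reward functions yield the same
Q-function iff they have the same expected one-step reward for every `(s,a)`
(i.e. one is produced from the other by S'-redistribution). -/
theorem Q_eq_iff_sprime_redistribution {S A : Type*} [Fintype S] [Fintype A]
    (γ : ℝ) (hγ0 : 0 < γ) (hγ1 : γ < 1)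
    (τ : S → A → S → ℝ) (hτ0 : ∀ s a s', 0 ≤ τ s a s')
    (hτ1 : ∀ s a, ∑ s', τ s a s' = 1)
    (π : S → A → ℝ) (hπ0 : ∀ s a, 0 ≤ π s a) (hπ1 : ∀ s, ∑ a, π s a = 1)
    (R₁ R₂ : S → A → S → ℝ) (Q₁ Q₂ : S → A → ℝ)
    (hQ₁ : ∀ s a, Q₁ s a = ∑ s', τ s a s' * (R₁ s a s' + γ * ∑ a', π s' a' * Q₁ s' a'))
    (hQ₂ : ∀ s a, Q₂ s a = ∑ s', τ s a s' * (R₂ s a s' + γ * ∑ a', π s' a' * Q₂ s' a')) :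
    Q₁ = Q₂ ↔
      ∀ s a, ∑ s', τ s a s' * R₁ s a s' = ∑ s', τ s a s' * R₂ s a s' := by
  have expand : ∀ (R : S → A → S → ℝ) (Q : S → A → ℝ) (s : S) (a : A),
      ∑ s', τ s a s' * (R s a s' + γ * ∑ a', π s' a' * Q s' a') =
        (∑ s', τ s a s' * R s a s') +
          γ * ∑ s', τ s a s' * ∑ a', π s' a' * Q s' a' := by
    intro R Q s a
    rw [Finset.mul_sum, ← Finset.sum_add_distrib]
    exact Finset.sum_congr rfl (fun s' _ => by ring)
  constructor
  · intro hQ s a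
    have h1 := hQ₁ s a
    have h2 := hQ₂ s a
    rw [expand] at h1 h2
    rw [hQ] at h1
    linarith [h1, h2]
  · intro h
    have key : ∀ s a, Q₁ s a - Q₂ s a =
        γ * ∑ s', τ s a s' * ∑ a', π s' a' * (Q₁ s' a' - Q₂ s' a') := by
      intro s a
      have h1 := hQ₁ s a
      have h2 := hQ₂ s a
      rw [expand] at h1 h2
      have hsplit : ∑ s', τ s a s' * ∑ a', π s' a' * (Q₁ s' a' - Q₂ s' a') =
          (∑ s', τ s a s' * ∑ a', π s' a' * Q₁ s' a') -
            ∑ s', τ s a s' * ∑ a', π s' a' * Q₂ s' a' := by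
        rw [← Finset.sum_sub_distrib]
        refine Finset.sum_congr rfl (fun s' _ => ?_)
        rw [← mul_sub, ← Finset.sum_sub_distrib]
        congr 1
        exact Finset.sum_congr rfl (fun a' _ => by ring)
      rw [hsplit, mul_sub]
      have hr := h s a
      linarith
    cases isEmpty_or_nonempty S with
    | inl hS => funext s a; exact hS.elim s
    | inr hS =>
      have hA : Nonempty A := by
        by_contra hA
        rw [not_nonempty_iff] at hA
        have := hπ1 (Classical.arbitrary S)
        simp at this
      have hne : (Finset.univ : Finset (S × A)).Nonempty := Finset.univ_nonempty
      set M : ℝ := Finset.univ.sup' hne (fun p : S × A => |Q₁ p.1 p.2 - Q₂ p.1 p.2|) with hM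
      have hbound : ∀ s a, |Q₁ s a - Q₂ s a| ≤ M :=
        fun s a => Finset.le_sup' (fun p : S × A => |Q₁ p.1 p.2 - Q₂ p.1 p.2|) (Finset.mem_univ (s, a))
      obtain ⟨p, -, hp⟩ := Finset.exists_mem_eq_sup' hne
        (fun p : S × A => |Q₁ p.1 p.2 - Q₂ p.1 p.2|)
      have hM0 : 0 ≤ M := by rw [hM, hp]; exact abs_nonneg _
      have hinner : ∀ s' : S, |∑ a', π s' a' * (Q₁ s' a' - Q₂ s' a')| ≤ M := by
        intro s'
        calc |∑ a', π s' a' * (Q₁ s' a' - Q₂ s' a')|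
            ≤ ∑ a', |π s' a' * (Q₁ s' a' - Q₂ s' a')| := Finset.abs_sum_le_sum_abs _ _
          _ ≤ ∑ a', π s' a' * M := by
              refine Finset.sum_le_sum (fun a' _ => ?_)
              rw [abs_mul, abs_of_nonneg (hπ0 s' a')]
              exact mul_le_mul_of_nonneg_left (hbound s' a') (hπ0 s' a')
          _ = M := by rw [← Finset.sum_mul, hπ1 s', one_mul]
      have hstep : M ≤ γ * M := by
        have h1 : M = γ * |∑ s', τ p.1 p.2 s' * ∑ a', π s' a' * (Q₁ s' a' - Q₂ s' a')| := by
          rw [hM, hp, key, abs_mul, abs_of_pos hγ0]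
        refine h1.trans_le (mul_le_mul_of_nonneg_left ?_ (le_of_lt hγ0))
        calc |∑ s', τ p.1 p.2 s' * ∑ a', π s' a' * (Q₁ s' a' - Q₂ s' a')|
            ≤ ∑ s', |τ p.1 p.2 s' * ∑ a', π s' a' * (Q₁ s' a' - Q₂ s' a')| :=
              Finset.abs_sum_le_sum_abs _ _
          _ ≤ ∑ s', τ p.1 p.2 s' * M := by
              refine Finset.sum_le_sum (fun s' _ => ?_)
              rw [abs_mul, abs_of_nonneg (hτ0 p.1 p.2 s')]
              exact mul_le_mul_of_nonneg_left (hinner s') (hτ0 p.1 p.2 s')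
          _ = M := by rw [← Finset.sum_mul, hτ1 p.1 p.2, one_mul]
      have hMz : M = 0 := by nlinarith
      funext s a
      have := hbound s a
      rw [hMz] at this
      have : |Q₁ s a - Q₂ s a| = 0 := le_antisymm this (abs_nonneg _)
      have := abs_eq_zero.mp this
      linarith
end

section
/- Potential shaping shifts the soft Q-function by the potential: if R₂ is produced by potential shaping of R₁ with potential Φ, then the soft Q-functions satisfy Q₂^H(s,a) = Q₁^H(s,a) − Φ(s) for all s, a, where each soft Q-function is the unique solution of its soft Bellman equation. -/
/-- Log-sum-exp monotone Lipschitz bound. -/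
lemma lse_le {A : Type*} [Fintype A] [Nonempty A] (x y : A → ℝ) (c : ℝ)
    (h : ∀ a, x a ≤ y a + c) :
    Real.log (∑ a, Real.exp (x a)) ≤ Real.log (∑ a, Real.exp (y a)) + c := by
  have hy : 0 < ∑ a, Real.exp (y a) :=
    Finset.sum_pos (fun a _ => Real.exp_pos _) Finset.univ_nonempty
  have hx : 0 < ∑ a, Real.exp (x a) :=
    Finset.sum_pos (fun a _ => Real.exp_pos _) Finset.univ_nonempty
  have hle : ∑ a, Real.exp (x a) ≤ Real.exp c * ∑ a, Real.exp (y a) := by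
    rw [Finset.mul_sum]
    refine Finset.sum_le_sum fun a _ => ?_
    rw [← Real.exp_add]
    exact Real.exp_le_exp.2 (by linarith [h a])
  calc Real.log (∑ a, Real.exp (x a))
      ≤ Real.log (Real.exp c * ∑ a, Real.exp (y a)) := Real.log_le_log hx hle
    _ = c + Real.log (∑ a, Real.exp (y a)) := by
        rw [Real.log_mul (Real.exp_ne_zero _) hy.ne', Real.log_exp]
    _ = _ := by ring

/-- Potential shaping shifts the soft Q-function by the potential:
if `Q₁` and `Q₂` satisfy the soft Bellman equations for `R₁` and for the shaped
reward `R₂`, then `Q₂(s,a) = Q₁(s,a) − Φ(s)`. -/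
theorem shaping_shifts_soft_Q {S A : Type*} [Fintype S] [Fintype A]
    (γ : ℝ) (hγ0 : 0 < γ) (hγ1 : γ < 1) (β : ℝ) (hβ : 0 < β)
    (τ : S → A → S → ℝ) (hτ0 : ∀ s a s', 0 ≤ τ s a s')
    (hτ1 : ∀ s a, ∑ s', τ s a s' = 1)
    (R₁ R₂ : S → A → S → ℝ) (Φ : S → ℝ)
    (hshape : ∀ s a s', R₂ s a s' = R₁ s a s' + γ * Φ s' - Φ s)
    (Q₁ Q₂ : S → A → ℝ)
    (hQ₁ : ∀ s a, Q₁ s a = ∑ s', τ s a s' *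
      (R₁ s a s' + γ * (1 / β) * Real.log (∑ a', Real.exp (β * Q₁ s' a'))))
    (hQ₂ : ∀ s a, Q₂ s a = ∑ s', τ s a s' *
      (R₂ s a s' + γ * (1 / β) * Real.log (∑ a', Real.exp (β * Q₂ s' a')))) :
    ∀ s a, Q₂ s a = Q₁ s a - Φ s := by
  intro s₀ a₀
  haveI : Nonempty S := ⟨s₀⟩
  haveI : Nonempty A := ⟨a₀⟩
  set D : S → A → ℝ := fun s a => Q₂ s a - Q₁ s a + Φ s with hD
  set L₁ : S → ℝ := fun s => Real.log (∑ a', Real.exp (β * Q₁ s a')) with hL₁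
  set L₂ : S → ℝ := fun s => Real.log (∑ a', Real.exp (β * Q₂ s a')) with hL₂
  set M : ℝ := Finset.univ.sup' Finset.univ_nonempty
      (fun p : S × A => |D p.1 p.2|) with hM
  have hle : ∀ s a, |D s a| ≤ M := fun s a =>
    Finset.le_sup' (fun p : S × A => |D p.1 p.2|) (Finset.mem_univ (s, a))
  have hM0 : 0 ≤ M := le_trans (abs_nonneg _) (hle s₀ a₀)
  -- the log-sum-exp difference bound
  have hg : ∀ s', |(1 / β) * L₂ s' - ((1 / β) * L₁ s' - Φ s')| ≤ M := by
    intro s'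
    have h3 : Real.log (∑ a', Real.exp (β * (Q₁ s' a' - Φ s'))) = L₁ s' - β * Φ s' := by
      have hpos : 0 < ∑ a', Real.exp (β * Q₁ s' a') :=
        Finset.sum_pos (fun a _ => Real.exp_pos _) Finset.univ_nonempty
      have : ∀ a' : A, Real.exp (β * (Q₁ s' a' - Φ s'))
          = Real.exp (β * Q₁ s' a') * Real.exp (-(β * Φ s')) := by
        intro a'; rw [← Real.exp_add]; ring_nf
      rw [Finset.sum_congr rfl fun a' _ => this a', ← Finset.sum_mul,
        Real.log_mul hpos.ne' (Real.exp_ne_zero _), Real.log_exp]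
      simp only [hL₁]; ring
    have hub : L₂ s' ≤ (L₁ s' - β * Φ s') + β * M := by
      rw [← h3]
      refine lse_le _ _ _ fun a' => ?_
      have := abs_le.1 (hle s' a')
      have : Q₂ s' a' ≤ Q₁ s' a' - Φ s' + M := by simp only [hD] at this; linarith [this.2]
      nlinarith
    have hlb : L₁ s' - β * Φ s' ≤ L₂ s' + β * M := by
      rw [← h3]
      refine lse_le _ _ _ fun a' => ?_
      have := abs_le.1 (hle s' a')
      have : Q₁ s' a' - Φ s' ≤ Q₂ s' a' + M := by simp only [hD] at this; linarith [this.1]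
      nlinarith
    have key2 : |L₂ s' - (L₁ s' - β * Φ s')| ≤ β * M :=
      abs_le.2 ⟨by linarith, by linarith⟩
    have heq : (1 / β) * L₂ s' - ((1 / β) * L₁ s' - Φ s')
        = (1 / β) * (L₂ s' - (L₁ s' - β * Φ s')) := by field_simp
    rw [heq, abs_mul, abs_of_pos (by positivity : (0:ℝ) < 1 / β)]
    calc (1 / β) * |L₂ s' - (L₁ s' - β * Φ s')| ≤ (1 / β) * (β * M) :=
          mul_le_mul_of_nonneg_left key2 (by positivity)
      _ = M := by field_simp
  -- contraction step
  have key : ∀ s a, |D s a| ≤ γ * M := by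
    intro s a
    set E : S → ℝ := fun s' => (1 / β) * L₂ s' - ((1 / β) * L₁ s' - Φ s') with hE
    have hDeq : D s a = γ * ∑ s', τ s a s' * E s' := by
      have h1 : Q₂ s a - Q₁ s a
          = ∑ s', (γ * (τ s a s' * E s') - τ s a s' * Φ s) := by
        rw [hQ₁ s a, hQ₂ s a, ← Finset.sum_sub_distrib]
        refine Finset.sum_congr rfl fun s' _ => ?_
        rw [hshape]
        simp only [hE, hL₁, hL₂]
        ring
      have h2 : ∑ s', (γ * (τ s a s' * E s') - τ s a s' * Φ s)
          = γ * (∑ s', τ s a s' * E s') - Φ s := by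
        rw [Finset.sum_sub_distrib, ← Finset.mul_sum, ← Finset.sum_mul, hτ1]
        ring
      simp only [hD]
      rw [h1, h2]; ring
    rw [hDeq, abs_mul, abs_of_pos hγ0]
    refine mul_le_mul_of_nonneg_left ?_ hγ0.le
    calc |∑ s', τ s a s' * E s'| ≤ ∑ s', |τ s a s' * E s'| := Finset.abs_sum_le_sum_abs _ _
      _ ≤ ∑ s', τ s a s' * M := by
          refine Finset.sum_le_sum fun s' _ => ?_
          rw [abs_mul, abs_of_nonneg (hτ0 s a s')]
          exact mul_le_mul_of_nonneg_left (hg s') (hτ0 s a s')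
      _ = M := by rw [← Finset.sum_mul, hτ1, one_mul]
  have hMle : M ≤ γ * M := by
    rw [hM]
    exact Finset.sup'_le _ _ fun p _ => key p.1 p.2
  have hMz : M = 0 := by nlinarith
  have := hle s₀ a₀
  rw [hMz] at this
  have : D s₀ a₀ = 0 := abs_eq_zero.1 (le_antisymm this (abs_nonneg _))
  simp only [hD] at this
  linarith
end

section
/- Optimality-preserving transformations preserve the set of optimal actions: if R' is produced from R by an optimality-preserving transformation with O(s) = argmax_a A*(s,a) for all s (where A* is the optimal advantage under R), then the bounding function Ψ equals the optimal value function V*' of the MDP with reward R', and the set of optimal actions in every state under R' equals O(s). -/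
/-- Optimality-preserving transformations preserve the set of
optimal actions.  Here `Vstar` is the optimal value function of the original
reward `R` (with `Astar` its optimal advantage), `V'` is the optimal value
function of `R'`, and `Ψ` is the bounding function of an optimality-preserving
transformation with `O(s) = argmax_a Astar(s,a)`.  Then `Ψ = V'` and the
optimal actions under `R'` are exactly `O(s)` in every state. -/
theorem opt_preserving_transformation_preserves_optimal_actions
    {S A : Type*} [Fintype S] [Fintype A] [Nonempty A]
    (γ : ℝ) (hγ0 : 0 < γ) (hγ1 : γ < 1)
    (τ : S → A → S → ℝ) (hτ0 : ∀ s a s', 0 ≤ τ s a s')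
    (hτ1 : ∀ s a, ∑ s', τ s a s' = 1)
    (R R' : S → A → S → ℝ)
    -- optimal value function of `R`, and its optimal advantage
    (Vstar : S → ℝ)
    (hVle : ∀ s a, (∑ s', τ s a s' * (R s a s' + γ * Vstar s')) ≤ Vstar s)
    (hVex : ∀ s, ∃ a, (∑ s', τ s a s' * (R s a s' + γ * Vstar s')) = Vstar s)
    (Astar : S → A → ℝ)
    (hA : ∀ s a, Astar s a = (∑ s', τ s a s' * (R s a s' + γ * Vstar s')) - Vstar s)
    -- optimal value function of `R'`
    (V' : S → ℝ)
    (hV'le : ∀ s a, (∑ s', τ s a s' * (R' s a s' + γ * V' s')) ≤ V' s)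
    (hV'ex : ∀ s, ∃ a, (∑ s', τ s a s' * (R' s a s' + γ * V' s')) = V' s)
    -- the optimality-preserving transformation with `O(s) = argmax_a Astar(s,a)`
    (Ψ : S → ℝ)
    (hΨle : ∀ s a, (∑ s', τ s a s' * (R' s a s' + γ * Ψ s')) ≤ Ψ s)
    (hΨeq : ∀ s a, (∑ s', τ s a s' * (R' s a s' + γ * Ψ s')) = Ψ s ↔
      ∀ a', Astar s a' ≤ Astar s a) :
    (∀ s, Ψ s = V' s) ∧
    (∀ s a, (∑ s', τ s a s' * (R' s a s' + γ * V' s')) = V' s ↔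
      ∀ a', Astar s a' ≤ Astar s a) := by
  -- First show Ψ = V' everywhere.
  have hΨex : ∀ s, ∃ a, (∑ s', τ s a s' * (R' s a s' + γ * Ψ s')) = Ψ s := by
    intro s
    obtain ⟨a, _, hmax⟩ := Finset.exists_max_image Finset.univ (Astar s)
      ⟨Classical.arbitrary A, Finset.mem_univ _⟩
    exact ⟨a, (hΨeq s a).2 fun a' => hmax a' (Finset.mem_univ _)⟩
  have hmain : ∀ s, Ψ s = V' s := by
    rcases isEmpty_or_nonempty S with h | h
    · intro s; exact isEmptyElim s
    obtain ⟨s₀, _, hmax⟩ := Finset.exists_max_image Finset.univ (fun s => |Ψ s - V' s|)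
      ⟨Classical.arbitrary S, Finset.mem_univ _⟩
    set M : ℝ := |Ψ s₀ - V' s₀| with hM
    have hMnn : 0 ≤ M := abs_nonneg _
    have hcontr : ∀ s a, (∑ s', τ s a s' * (R' s a s' + γ * Ψ s'))
        - (∑ s', τ s a s' * (R' s a s' + γ * V' s')) ≤ γ * M := by
      intro s a
      rw [← Finset.sum_sub_distrib]
      have : ∀ s' ∈ Finset.univ, τ s a s' * (R' s a s' + γ * Ψ s')
          - τ s a s' * (R' s a s' + γ * V' s') ≤ τ s a s' * (γ * M) := by
        intro s' _
        have h1 : Ψ s' - V' s' ≤ M :=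
          le_trans (le_abs_self _) (hmax s' (Finset.mem_univ _))
        have := mul_le_mul_of_nonneg_left (mul_le_mul_of_nonneg_left h1 hγ0.le) (hτ0 s a s')
        nlinarith [hτ0 s a s']
      calc (∑ s', (τ s a s' * (R' s a s' + γ * Ψ s') - τ s a s' * (R' s a s' + γ * V' s')))
          ≤ ∑ s', τ s a s' * (γ * M) := Finset.sum_le_sum this
        _ = γ * M := by rw [← Finset.sum_mul, hτ1 s a, one_mul]
    have hcontr' : ∀ s a, (∑ s', τ s a s' * (R' s a s' + γ * V' s'))
        - (∑ s', τ s a s' * (R' s a s' + γ * Ψ s')) ≤ γ * M := by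
      intro s a
      rw [← Finset.sum_sub_distrib]
      have : ∀ s' ∈ Finset.univ, τ s a s' * (R' s a s' + γ * V' s')
          - τ s a s' * (R' s a s' + γ * Ψ s') ≤ τ s a s' * (γ * M) := by
        intro s' _
        have h1 : V' s' - Ψ s' ≤ M :=
          le_trans (le_abs_self _)
            (by rw [abs_sub_comm]; exact hmax s' (Finset.mem_univ _))
        have := mul_le_mul_of_nonneg_left (mul_le_mul_of_nonneg_left h1 hγ0.le) (hτ0 s a s')
        nlinarith [hτ0 s a s']
      calc (∑ s', (τ s a s' * (R' s a s' + γ * V' s') - τ s a s' * (R' s a s' + γ * Ψ s')))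
          ≤ ∑ s', τ s a s' * (γ * M) := Finset.sum_le_sum this
        _ = γ * M := by rw [← Finset.sum_mul, hτ1 s a, one_mul]
    have key : ∀ s, |Ψ s - V' s| ≤ γ * M := by
      intro s
      rw [abs_le]
      constructor
      · obtain ⟨a, ha⟩ := hV'ex s
        have h1 := hΨle s a
        have h2 := hcontr' s a
        linarith
      · obtain ⟨a, ha⟩ := hΨex s
        have h1 := hV'le s a
        have h2 := hcontr s a
        linarith
    have hM0 : M ≤ 0 := by
      have := key s₀
      nlinarith
    intro s
    have h1 := key s
    have h2 : |Ψ s - V' s| ≤ 0 := le_trans h1 (by nlinarith)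
    have := abs_nonneg (Ψ s - V' s)
    have : |Ψ s - V' s| = 0 := le_antisymm h2 this
    have := abs_eq_zero.mp this
    linarith
  refine ⟨hmain, fun s a => ?_⟩
  have hfun : Ψ = V' := funext hmain
  rw [← hfun]
  exact hΨeq s a
end

section
/- Matching optimal action sets imply an optimality-preserving transformation: if two reward functions R and R' on the same MDP induce the same set of optimal actions argmax_a A*(s,a) in every state s, then R' is produced from R by an optimality-preserving transformation with O(s) = argmax_a A*(s,a), witnessed by Ψ = V*', the optimal value function under R'. -/
/-- Matching optimal action sets imply an optimality-preserving
transformation: if `R` and `R'` (with optimal value functions `V`, `V'` and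
optimal advantages `A₁`, `A₂`) induce the same set of optimal actions
`argmax_a A*(s,a)` in every state, then `R'` is produced from `R` by an
optimality-preserving transformation with `O(s) = argmax_a A*(s,a)`,
witnessed by `Ψ = V'`. -/
theorem matching_optimal_actions_implies_opt_preserving
    {S A : Type*} [Fintype S] [Fintype A] [Nonempty A]
    (γ : ℝ) (hγ0 : 0 < γ) (hγ1 : γ < 1)
    (τ : S → A → S → ℝ) (hτ0 : ∀ s a s', 0 ≤ τ s a s')
    (hτ1 : ∀ s a, ∑ s', τ s a s' = 1)
    (R R' : S → A → S → ℝ)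
    (V : S → ℝ)
    (hVle : ∀ s a, (∑ s', τ s a s' * (R s a s' + γ * V s')) ≤ V s)
    (hVex : ∀ s, ∃ a, (∑ s', τ s a s' * (R s a s' + γ * V s')) = V s)
    (A₁ : S → A → ℝ)
    (hA₁ : ∀ s a, A₁ s a = (∑ s', τ s a s' * (R s a s' + γ * V s')) - V s)
    (V' : S → ℝ)
    (hV'le : ∀ s a, (∑ s', τ s a s' * (R' s a s' + γ * V' s')) ≤ V' s)
    (hV'ex : ∀ s, ∃ a, (∑ s', τ s a s' * (R' s a s' + γ * V' s')) = V' s)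
    (A₂ : S → A → ℝ)
    (hA₂ : ∀ s a, A₂ s a = (∑ s', τ s a s' * (R' s a s' + γ * V' s')) - V' s)
    -- matching sets of optimal actions in every state
    (hmatch : ∀ s a, (∀ a', A₁ s a' ≤ A₁ s a) ↔ (∀ a', A₂ s a' ≤ A₂ s a)) :
    ∀ s a, (∑ s', τ s a s' * (R' s a s' + γ * V' s')) ≤ V' s ∧
      ((∑ s', τ s a s' * (R' s a s' + γ * V' s')) = V' s ↔
        ∀ a', A₁ s a' ≤ A₁ s a) := by
  intro s a
  have hA2le : ∀ a', A₂ s a' ≤ 0 := fun a' => by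
    rw [hA₂]; linarith [hV'le s a']
  refine ⟨hV'le s a, ?_, ?_⟩
  · intro heq
    rw [hmatch]
    intro a'
    have : A₂ s a = 0 := by rw [hA₂]; linarith
    rw [this]; exact hA2le a'
  · intro hmax
    have h2 := (hmatch s a).mp hmax
    obtain ⟨a₀, ha₀⟩ := hV'ex s
    have h0 : A₂ s a₀ = 0 := by rw [hA₂]; linarith
    have := h2 a₀
    rw [h0] at this
    have : A₂ s a = 0 := le_antisymm (hA2le a) this
    rw [hA₂] at this; linarith
end

section
/- S'-redistribution can set expected rewards arbitrarily under changed dynamics: given a finite MDP with transition kernel τ and reward R₁, alternative dynamics τ', and any function L : S × A → ℝ, there exists a reward R₂ with E_{S'∼τ(s,a)}[R₂(s,a,S')] = E_{S'∼τ(s,a)}[R₁(s,a,S')] for all (s,a), and E_{S'∼τ'(s,a)}[R₂(s,a,S')] = L(s,a) for every (s,a) with τ(s,a) ≠ τ'(s,a). -/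
/-- S'-redistribution can set expected rewards arbitrarily under
changed dynamics: there exists `R₂` agreeing with `R₁` in expectation under
`τ`, whose expectation under `τ'` equals `L(s,a)` wherever `τ(s,a) ≠ τ'(s,a)`. -/
theorem sprime_redistribution_transfer {S A : Type*} [Fintype S]
    (τ τ' : S → A → S → ℝ)
    (hτ0 : ∀ s a s', 0 ≤ τ s a s') (hτ1 : ∀ s a, ∑ s', τ s a s' = 1)
    (hτ'0 : ∀ s a s', 0 ≤ τ' s a s') (hτ'1 : ∀ s a, ∑ s', τ' s a s' = 1)
    (R₁ : S → A → S → ℝ) (L : S → A → ℝ) :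
    ∃ R₂ : S → A → S → ℝ,
      (∀ s a, ∑ s', τ s a s' * R₂ s a s' = ∑ s', τ s a s' * R₁ s a s') ∧
      (∀ s a, (fun s' => τ s a s') ≠ (fun s' => τ' s a s') →
        ∑ s', τ' s a s' * R₂ s a s' = L s a) := by
  classical
  set D : S → A → ℝ := fun s a => ∑ s', (τ s a s' - τ' s a s')^2 with hD
  set c : S → A → ℝ := fun s a => L s a - ∑ s', τ' s a s' * R₁ s a s' with hc
  set α : S → A → ℝ := fun s a => - c s a / D s a with hα
  set β : S → A → ℝ := fun s a =>
    - α s a * ∑ s', τ s a s' * (τ s a s' - τ' s a s') with hβ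
  refine ⟨fun s a s' =>
    if (fun s' => τ s a s') = (fun s' => τ' s a s') then R₁ s a s'
    else R₁ s a s' + α s a * (τ s a s' - τ' s a s') + β s a, ?_, ?_⟩
  · intro s a
    by_cases h : (fun s' => τ s a s') = (fun s' => τ' s a s')
    · simp [h]
    · simp only [h, if_neg, if_false]
      have : ∑ s', τ s a s' * (R₁ s a s' + α s a * (τ s a s' - τ' s a s') + β s a)
          = (∑ s', τ s a s' * R₁ s a s')
            + α s a * (∑ s', τ s a s' * (τ s a s' - τ' s a s'))
            + β s a * (∑ s', τ s a s') := by
        rw [Finset.mul_sum, Finset.mul_sum, ← Finset.sum_add_distrib,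
          ← Finset.sum_add_distrib]
        apply Finset.sum_congr rfl
        intro x _
        ring
      rw [this, hτ1, hβ]
      ring
  · intro s a h
    simp only [h, if_neg, if_false]
    have hDpos : 0 < D s a := by
      have hex : ∃ s', τ s a s' ≠ τ' s a s' := by
        by_contra hall
        push_neg at hall
        exact h (funext hall)
      obtain ⟨s'', hs''⟩ := hex
      exact Finset.sum_pos' (fun s' _ => sq_nonneg _)
        ⟨s'', Finset.mem_univ _, by have h0 := sub_ne_zero.mpr hs''; positivity⟩
    have key : ∑ s', τ' s a s' * (R₁ s a s' + α s a * (τ s a s' - τ' s a s') + β s a)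
        = (∑ s', τ' s a s' * R₁ s a s')
          + α s a * (∑ s', τ' s a s' * (τ s a s' - τ' s a s'))
          + β s a * (∑ s', τ' s a s') := by
      rw [Finset.mul_sum, Finset.mul_sum, ← Finset.sum_add_distrib,
        ← Finset.sum_add_distrib]
      apply Finset.sum_congr rfl
      intro x _
      ring
    rw [key, hτ'1, hβ]
    have hdiff : (∑ s', τ s a s' * (τ s a s' - τ' s a s'))
        - (∑ s', τ' s a s' * (τ s a s' - τ' s a s')) = D s a := by
      rw [← Finset.sum_sub_distrib]
      apply Finset.sum_congr rfl
      intro x _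
      ring
    have hαval : α s a * (D s a) = - c s a := by
      rw [hα]
      field_simp
    have : α s a * (∑ s', τ' s a s' * (τ s a s' - τ' s a s'))
        - α s a * (∑ s', τ s a s' * (τ s a s' - τ' s a s')) = c s a := by
      rw [← mul_sub, ← neg_sub, mul_neg, hdiff, hαval]
      ring
    simp only [hc] at this ⊢
    linarith [this]
end
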